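/- Let p̄ be a full-support probability distribution on 𝒳×𝒜 with policy π̄ = π_{p̄}, and let G(θ) = (1/η)·log(Σ_{x,a} p̄(x,a)·e^{η·Δ_θ(x,a)}) + (1−γ)·Σ_x ν₀(x)·V_θ(x) be the associated logistic Bellman error, with V_θ(x) = (1/α)·log(Σ_a π̄(a|x)·e^{α·Q_θ(x,a)}). Let θ* minimize G and θ̂ be arbitrary, with suboptimality gap ε = G(θ̂) − G(θ*). Define p*(x,a) ∝ p̄(x,a)·e^{η·Δ_{θ*}(x,a)} and p̃(x,a) ∝ p̄(x,a)·e^{η·Δ_{θ̂}(x,a)} (normalized to probability distributions), policies π*(a|x) = π̄(a|x)·e^{α·(Q_{θ*}(x,a) − V_{θ*}(x))} and π̂(a|x) = π̄(a|x)·e^{α·(Q_{θ̂}(x,a) − V_{θ̂}(x))}, and d*(x,a) = ν*(x)·π*(a|x) with ν*(x) = γ·Σ_{x',a'} P(x|x',a')·p*(x',a') + (1−γ)·ν₀(x). Then ε = D(p*‖p̃)/η + (1/α)·Σ_{x,a} d*(x,a)·log(π*(a|x)/π̂(a|x)). -/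

import Mathlib

open Finset Real

lemma aux_v {A : Type*} [Fintype A] (α : ℝ) (hα : 0 < α) (c b q : A → ℝ)
    (hS : 0 < ∑ a, c a * Real.exp (α * b a)) :
    HasDerivAt (fun t : ℝ => (1/α) * Real.log (∑ a, c a * Real.exp (α * (b a + t * q a))))
      ((∑ a, c a * Real.exp (α * b a) * q a) / (∑ a, c a * Real.exp (α * b a))) 0 := by
  have hsum : HasDerivAt (fun t : ℝ => ∑ a, c a * Real.exp (α * (b a + t * q a)))
      (∑ a : A, c a * (Real.exp (α * (b a + 0 * q a)) * (α * q a))) 0 := by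
    apply HasDerivAt.fun_sum
    intro a _
    have h1 : HasDerivAt (fun t : ℝ => b a + t * q a) (q a) 0 := by
      simpa using ((hasDerivAt_id (0:ℝ)).mul_const (q a)).const_add (b a)
    exact ((h1.const_mul α).exp).const_mul (c a)
  have hne : (∑ a, c a * Real.exp (α * (b a + 0 * q a))) ≠ 0 := by
    simpa using hS.ne'
  have hlog := (hsum.log hne).const_mul (1/α)
  refine hlog.congr_deriv ?_
  simp only [zero_mul, add_zero]
  have h2 : (∑ a, c a * (Real.exp (α * b a) * (α * q a)))
      = α * ∑ a, c a * Real.exp (α * b a) * q a := by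
    rw [Finset.mul_sum]; exact sum_congr rfl (fun a _ => by ring)
  rw [h2]
  field_simp



/-- The suboptimality gap ε = G(θ̂) − G(θ*) of the logistic Bellman error
decomposes exactly as ε = D(p*‖p̃)/η + (1/α)·Σ_{x,a} d*(x,a)·log(π*(a|x)/π̂(a|x)). -/
theorem stmt8 {X A : Type*} [Fintype X] [Fintype A] [Nonempty X] [Nonempty A]
    {m : ℕ} (P : X → A → X → ℝ) (r : X → A → ℝ) (γ : ℝ) (ν₀ : X → ℝ)
    (φ : X → A → Fin m → ℝ) (α η : ℝ)
    (hP0 : ∀ x a x', 0 ≤ P x a x') (hP1 : ∀ x a, ∑ x', P x a x' = 1)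
    (hr : ∀ x a, 0 ≤ r x a ∧ r x a ≤ 1)
    (hγ0 : 0 < γ) (hγ1 : γ < 1)
    (hν₀0 : ∀ x, 0 ≤ ν₀ x) (hν₀1 : ∑ x, ν₀ x = 1)
    (hα : 0 < α) (hη : 0 < η)
    -- the full-support reference distribution p̄ and its policy π̄
    (pbar : X → A → ℝ) (hpbarpos : ∀ x a, 0 < pbar x a)
    (hpbar1 : ∑ x, ∑ a, pbar x a = 1)
    (πbar : X → A → ℝ) (hπbar : ∀ x a, πbar x a = pbar x a / ∑ a', pbar x a')
    (Q : (Fin m → ℝ) → X → A → ℝ)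
    (hQ : ∀ θ x a, Q θ x a = ∑ i, θ i * φ x a i)
    (V : (Fin m → ℝ) → X → ℝ)
    (hV : ∀ θ x, V θ x = (1 / α) * Real.log (∑ a, πbar x a * Real.exp (α * Q θ x a)))
    (Δ : (Fin m → ℝ) → X → A → ℝ)
    (hΔ : ∀ θ x a, Δ θ x a = r x a + γ * (∑ x', P x a x' * V θ x') - Q θ x a)
    (G : (Fin m → ℝ) → ℝ)
    (hG : ∀ θ, G θ = (1 / η) * Real.log (∑ x, ∑ a, pbar x a * Real.exp (η * Δ θ x a))
        + (1 - γ) * ∑ x, ν₀ x * V θ x)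
    -- the exact minimizer θ*, an arbitrary θ̂ and its suboptimality gap ε
    (θs θh : Fin m → ℝ) (hθs : ∀ θ, G θs ≤ G θ)
    (ε : ℝ) (hε : ε = G θh - G θs)
    -- the induced distributions and policies
    (ps pt : X → A → ℝ)
    (hps : ∀ x a, ps x a = pbar x a * Real.exp (η * Δ θs x a)
        / ∑ x', ∑ a', pbar x' a' * Real.exp (η * Δ θs x' a'))
    (hpt : ∀ x a, pt x a = pbar x a * Real.exp (η * Δ θh x a)
        / ∑ x', ∑ a', pbar x' a' * Real.exp (η * Δ θh x' a'))
    (πs πh : X → A → ℝ)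
    (hπs : ∀ x a, πs x a = πbar x a * Real.exp (α * (Q θs x a - V θs x)))
    (hπh : ∀ x a, πh x a = πbar x a * Real.exp (α * (Q θh x a - V θh x)))
    (νs : X → ℝ)
    (hνs : ∀ x, νs x = γ * (∑ x', ∑ a', P x' a' x * ps x' a') + (1 - γ) * ν₀ x)
    (ds : X → A → ℝ) (hds : ∀ x a, ds x a = νs x * πs x a) :
    ε = (∑ x, ∑ a, (ps x a * Real.log (ps x a / pt x a) - ps x a + pt x a)) / η
        + (1 / α) * ∑ x, ∑ a, ds x a * Real.log (πs x a / πh x a) := by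
  classical
  -- basic positivity facts
  have hπbarpos : ∀ x a, 0 < πbar x a := by
    intro x a
    rw [hπbar]
    exact div_pos (hpbarpos x a) (Finset.sum_pos (fun a _ => hpbarpos x a) univ_nonempty)
  set Zs := ∑ x, ∑ a, pbar x a * Real.exp (η * Δ θs x a) with hZs
  set Zh := ∑ x, ∑ a, pbar x a * Real.exp (η * Δ θh x a) with hZh
  have hZspos : 0 < Zs :=
    Finset.sum_pos (fun x _ => Finset.sum_pos
      (fun a _ => mul_pos (hpbarpos x a) (Real.exp_pos _)) univ_nonempty) univ_nonempty
  have hZhpos : 0 < Zh :=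
    Finset.sum_pos (fun x _ => Finset.sum_pos
      (fun a _ => mul_pos (hpbarpos x a) (Real.exp_pos _)) univ_nonempty) univ_nonempty
  set Sx : X → ℝ := fun x => ∑ a, πbar x a * Real.exp (α * Q θs x a) with hSxdef
  have hSxpos : ∀ x, 0 < Sx x :=
    fun x => Finset.sum_pos (fun a _ => mul_pos (hπbarpos x a) (Real.exp_pos _)) univ_nonempty
  have hexpVs : ∀ x, Real.exp (α * V θs x) = Sx x := by
    intro x
    rw [hV, ← mul_assoc, mul_one_div, div_self hα.ne', one_mul, Real.exp_log (hSxpos x)]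
  have hπs_alt : ∀ x a, πs x a = πbar x a * Real.exp (α * Q θs x a) / Sx x := by
    intro x a
    rw [hπs, mul_sub, Real.exp_sub, hexpVs, mul_div_assoc]
  have hπs_sum : ∀ x, ∑ a, πs x a = 1 := by
    intro x
    simp only [hπs_alt, ← Finset.sum_div]
    exact div_self (hSxpos x).ne'
  have hps_sum : ∑ x, ∑ a, ps x a = 1 := by
    simp only [hps, ← Finset.sum_div, ← hZs]
    exact div_self hZspos.ne'
  have hpt_sum : ∑ x, ∑ a, pt x a = 1 := by
    simp only [hpt, ← Finset.sum_div, ← hZh]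
    exact div_self hZhpos.ne'
  have hds_sum : ∀ x, ∑ a, ds x a = νs x := by
    intro x
    simp only [hds, ← Finset.mul_sum, hπs_sum, mul_one]
  -- the log-ratio identities
  have hlogp : ∀ x a, Real.log (ps x a / pt x a)
      = η * Δ θs x a - η * Δ θh x a + (Real.log Zh - Real.log Zs) := by
    intro x a
    have e1 : ps x a = Real.exp (Real.log (pbar x a) + η * Δ θs x a - Real.log Zs) := by
      rw [hps, Real.exp_sub, Real.exp_add, Real.exp_log (hpbarpos x a), Real.exp_log hZspos]
    have e2 : pt x a = Real.exp (Real.log (pbar x a) + η * Δ θh x a - Real.log Zh) := by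
      rw [hpt, Real.exp_sub, Real.exp_add, Real.exp_log (hpbarpos x a), Real.exp_log hZhpos]
    rw [e1, e2, ← Real.exp_sub, Real.log_exp]
    ring
  have hlogπ : ∀ x a, Real.log (πs x a / πh x a)
      = α * (Q θs x a - V θs x) - α * (Q θh x a - V θh x) := by
    intro x a
    have e1 : πs x a = Real.exp (Real.log (πbar x a) + α * (Q θs x a - V θs x)) := by
      rw [hπs, Real.exp_add, Real.exp_log (hπbarpos x a)]
    have e2 : πh x a = Real.exp (Real.log (πbar x a) + α * (Q θh x a - V θh x)) := by
      rw [hπh, Real.exp_add, Real.exp_log (hπbarpos x a)]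
    rw [e1, e2, ← Real.exp_sub, Real.log_exp]
    ring
  -- the sum-swap helper
  have hswap : ∀ F : X → ℝ,
      (∑ x, ∑ a, ps x a * (γ * ∑ x', P x a x' * F x'))
        = ∑ x', (νs x' - (1 - γ) * ν₀ x') * F x' := by
    intro F
    have e1 : (∑ x, ∑ a, ps x a * (γ * ∑ x', P x a x' * F x'))
        = ∑ x, ∑ a, ∑ x', γ * (P x a x' * ps x a) * F x' := by
      refine sum_congr rfl fun x _ => sum_congr rfl fun a _ => ?_
      rw [Finset.mul_sum, Finset.mul_sum]
      exact sum_congr rfl fun x' _ => by ring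
    rw [e1]
    have e2 : (∑ x, ∑ a, ∑ x', γ * (P x a x' * ps x a) * F x')
        = ∑ x', ∑ x, ∑ a, γ * (P x a x' * ps x a) * F x' :=
      calc (∑ x, ∑ a, ∑ x', γ * (P x a x' * ps x a) * F x')
          = ∑ x, ∑ x', ∑ a, γ * (P x a x' * ps x a) * F x' :=
            sum_congr rfl fun x _ => Finset.sum_comm
        _ = ∑ x', ∑ x, ∑ a, γ * (P x a x' * ps x a) * F x' := Finset.sum_comm
    rw [e2]
    refine sum_congr rfl fun x' _ => ?_
    rw [hνs]
    have : (∑ x, ∑ a, γ * (P x a x' * ps x a) * F x')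
        = γ * (∑ x, ∑ a, P x a x' * ps x a) * F x' := by
      simp only [Finset.sum_mul, Finset.mul_sum]
    rw [this]
    ring
  -- derivative setup
  set q : X → A → ℝ := fun x a => Q θh x a - Q θs x a with hqdef
  set W : X → ℝ := fun x => ∑ a, πs x a * q x a with hWdef
  set v : X → ℝ → ℝ := fun x t =>
    (1/α) * Real.log (∑ a, πbar x a * Real.exp (α * (Q θs x a + t * q x a))) with hvdef
  have hW : ∀ x : X, HasDerivAt (v x) (W x) 0 := by
    intro x
    have hSx' : 0 < ∑ a, πbar x a * Real.exp (α * Q θs x a) := by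
      simpa [hSxdef] using hSxpos x
    have h := aux_v α hα (πbar x) (Q θs x) (q x) hSx'
    convert h using 1
    rw [hWdef]
    simp only []
    rw [Finset.sum_div]
    exact sum_congr rfl fun a _ => by rw [hπs_alt]; ring
  set DΔ : X → A → ℝ := fun x a => γ * ∑ x', P x a x' * W x' - q x a with hDΔdef
  have hΔd : ∀ x a, HasDerivAt
      (fun t => r x a + γ * (∑ x', P x a x' * v x' t) - (Q θs x a + t * q x a)) (DΔ x a) 0 := by
    intro x a
    have hsum : HasDerivAt (fun t => ∑ x', P x a x' * v x' t) (∑ x', P x a x' * W x') 0 :=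
      HasDerivAt.fun_sum (fun x' _ => (hW x').const_mul (P x a x'))
    have h2 : HasDerivAt (fun t : ℝ => Q θs x a + t * q x a) (q x a) 0 := by
      simpa using ((hasDerivAt_id (0:ℝ)).mul_const (q x a)).const_add (Q θs x a)
    exact ((hsum.const_mul γ).const_add (r x a)).sub h2
  have hv0 : ∀ x, v x 0 = V θs x := by
    intro x
    simp only [hvdef, hV, zero_mul, add_zero]
  have hDin0 : ∀ x a,
      r x a + γ * (∑ x', P x a x' * v x' 0) - (Q θs x a + 0 * q x a) = Δ θs x a := by
    intro x a
    rw [hΔ]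
    simp only [hv0, zero_mul, add_zero]
  set Tf : ℝ → ℝ := fun t => ∑ x, ∑ a, pbar x a *
    Real.exp (η * (r x a + γ * (∑ x', P x a x' * v x' t) - (Q θs x a + t * q x a))) with hTfdef
  have hT0 : Tf 0 = Zs := by
    simp only [hTfdef, hDin0]
    exact hZs.symm
  have hTd : HasDerivAt Tf
      (∑ x, ∑ a, pbar x a * (Real.exp (η * Δ θs x a) * (η * DΔ x a))) 0 := by
    rw [hTfdef]
    apply HasDerivAt.fun_sum
    intro x _
    apply HasDerivAt.fun_sum
    intro a _
    have h := (((hΔd x a).const_mul η).exp).const_mul (pbar x a)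
    simpa only [hDin0] using h
  set g : ℝ → ℝ := fun t => (1/η) * Real.log (Tf t) + (1 - γ) * ∑ x, ν₀ x * v x t with hgdef
  have hgd : HasDerivAt g
      ((1/η) * ((∑ x, ∑ a, pbar x a * (Real.exp (η * Δ θs x a) * (η * DΔ x a))) / Zs)
        + (1 - γ) * ∑ x, ν₀ x * W x) 0 := by
    rw [hgdef]
    have h1 := (hTd.log (by rw [hT0]; exact hZspos.ne')).const_mul (1/η)
    rw [hT0] at h1
    have h2 : HasDerivAt (fun t => ∑ x, ν₀ x * v x t) (∑ x, ν₀ x * W x) 0 :=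
      HasDerivAt.fun_sum (fun x _ => (hW x).const_mul (ν₀ x))
    exact h1.add (h2.const_mul (1 - γ))
  have hQlin : ∀ (t : ℝ) (x : X) (a : A),
      Q (θs + t • (θh - θs)) x a = Q θs x a + t * q x a := by
    intro t x a
    simp only [hQ, hqdef, Pi.add_apply, Pi.smul_apply, Pi.sub_apply, smul_eq_mul]
    rw [← Finset.sum_sub_distrib, Finset.mul_sum, ← Finset.sum_add_distrib]
    exact sum_congr rfl fun i _ => by ring
  have hVt : ∀ (t : ℝ) (x : X), V (θs + t • (θh - θs)) x = v x t := by
    intro t x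
    simp only [hV, hvdef, hQlin]
  have hgeq : ∀ t : ℝ, g t = G (θs + t • (θh - θs)) := by
    intro t
    simp only [hgdef, hG, hΔ, hVt, hQlin, hTfdef]
  have hg0 : g 0 = G θs := by
    have h := hgeq 0
    simpa using h
  have hmin : IsLocalMin g 0 :=
    Filter.Eventually.of_forall (fun t => by rw [hg0, hgeq t]; exact hθs _)
  have hDzero := hmin.hasDerivAt_eq_zero hgd
  have hkey : (∑ x, ∑ a, ps x a * DΔ x a) + (1 - γ) * ∑ x, ν₀ x * W x = 0 := by
    have hT' : (∑ x, ∑ a, pbar x a * (Real.exp (η * Δ θs x a) * (η * DΔ x a)))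
        = η * Zs * ∑ x, ∑ a, ps x a * DΔ x a := by
      simp only [Finset.mul_sum]
      refine sum_congr rfl fun x _ => sum_congr rfl fun a _ => ?_
      rw [hps]
      field_simp
    rw [hT'] at hDzero
    have hsimp : (1/η) * (η * Zs * (∑ x, ∑ a, ps x a * DΔ x a) / Zs)
        = ∑ x, ∑ a, ps x a * DΔ x a := by
      field_simp
    rw [hsimp] at hDzero
    linarith [hDzero]
  -- convert hkey to hB
  have hνsW : ∑ x, νs x * W x = ∑ x, ∑ a, ds x a * q x a := by
    refine sum_congr rfl fun x _ => ?_
    rw [hWdef]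
    simp only []
    rw [Finset.mul_sum]
    exact sum_congr rfl fun a _ => by rw [hds]; ring
  have hkey2 : ∑ x, ∑ a, ps x a * DΔ x a
      = ∑ x, (νs x - (1-γ) * ν₀ x) * W x - ∑ x, ∑ a, ps x a * q x a := by
    have e : ∀ (x : X) (a : A), ps x a * DΔ x a
        = ps x a * (γ * ∑ x', P x a x' * W x') - ps x a * q x a := by
      intro x a
      rw [hDΔdef]
      simp only []
      ring
    simp only [e, Finset.sum_sub_distrib]
    rw [hswap W]
  have hB : ∑ x, ∑ a, ds x a * q x a = ∑ x, ∑ a, ps x a * q x a := by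
    have e : ∑ x, (νs x - (1-γ) * ν₀ x) * W x
        = ∑ x, νs x * W x - (1-γ) * ∑ x, ν₀ x * W x := by
      rw [Finset.mul_sum, ← Finset.sum_sub_distrib]
      exact sum_congr rfl fun x _ => by ring
    rw [hkey2, e, hνsW] at hkey
    linarith [hkey]
  -- the D-term
  have hD : (∑ x, ∑ a, (ps x a * Real.log (ps x a / pt x a) - ps x a + pt x a))
      = η * (∑ x, ∑ a, ps x a * (Δ θs x a - Δ θh x a)) + (Real.log Zh - Real.log Zs) := by
    have e : ∀ (x : X) (a : A), ps x a * Real.log (ps x a / pt x a) - ps x a + pt x a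
        = η * (ps x a * (Δ θs x a - Δ θh x a)) + (Real.log Zh - Real.log Zs) * ps x a
          + (pt x a - ps x a) := by
      intro x a
      rw [hlogp]
      ring
    simp only [e, Finset.sum_add_distrib, Finset.sum_sub_distrib, ← Finset.mul_sum]
    rw [hps_sum, hpt_sum]
    ring
  -- the policy term
  have hPolTerm : (∑ x, ∑ a, ds x a * Real.log (πs x a / πh x a))
      = α * ((∑ x, ∑ a, ds x a * (Q θs x a - Q θh x a))
        - ∑ x, νs x * (V θs x - V θh x)) := by
    have e : ∀ (x : X) (a : A), ds x a * Real.log (πs x a / πh x a)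
        = α * (ds x a * (Q θs x a - Q θh x a)) - α * (ds x a * (V θs x - V θh x)) := by
      intro x a
      rw [hlogπ]
      ring
    simp only [e, Finset.sum_sub_distrib, ← Finset.mul_sum]
    have e2 : ∀ x : X, ∑ a, ds x a * (V θs x - V θh x) = νs x * (V θs x - V θh x) := by
      intro x
      rw [← Finset.sum_mul, hds_sum]
    simp only [e2]
    ring
  -- the A-term
  have hA : (∑ x, ∑ a, ps x a * (Δ θs x a - Δ θh x a))
      = ∑ x, (νs x - (1-γ) * ν₀ x) * (V θs x - V θh x)
        - ∑ x, ∑ a, ps x a * (Q θs x a - Q θh x a) := by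
    have e : ∀ (x : X) (a : A), ps x a * (Δ θs x a - Δ θh x a)
        = ps x a * (γ * ∑ x', P x a x' * (V θs x' - V θh x'))
          - ps x a * (Q θs x a - Q θh x a) := by
      intro x a
      have e3 : ∑ x', P x a x' * (V θs x' - V θh x')
          = (∑ x', P x a x' * V θs x') - ∑ x', P x a x' * V θh x' := by
        rw [← Finset.sum_sub_distrib]
        exact sum_congr rfl fun x' _ => by ring
      rw [hΔ, hΔ, e3]
      ring
    simp only [e, Finset.sum_sub_distrib]
    rw [hswap (fun x => V θs x - V θh x)]
  have hneg : ∀ f : X → A → ℝ, (∑ x, ∑ a, f x a * (Q θs x a - Q θh x a))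
      = -∑ x, ∑ a, f x a * q x a := by
    intro f
    rw [← Finset.sum_neg_distrib]
    refine sum_congr rfl fun x _ => ?_
    rw [← Finset.sum_neg_distrib]
    refine sum_congr rfl fun a _ => ?_
    rw [hqdef]
    simp only []
    ring
  have hν₀VV : ∑ x, (νs x - (1-γ) * ν₀ x) * (V θs x - V θh x)
      = (∑ x, νs x * (V θs x - V θh x))
        - (1-γ) * ((∑ x, ν₀ x * V θs x) - ∑ x, ν₀ x * V θh x) := by
    have e : ∀ x : X, (νs x - (1-γ)*ν₀ x) * (V θs x - V θh x)
        = νs x * (V θs x - V θh x) - (1-γ)*(ν₀ x * V θs x - ν₀ x * V θh x) := fun x => by ring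
    simp only [e, Finset.sum_sub_distrib, ← Finset.mul_sum]
  -- final assembly
  rw [hε, hG θh, hG θs, ← hZs, ← hZh, hD, hPolTerm, hA, hneg ds, hneg ps, hB, hν₀VV]
  field_simp
  ring
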